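/- Let n ≥ 2 and d ≥ 1 be integers and let μ be a finite Borel measure on K_n^d invariant under permutations of the n ball factors, with moments z_0 = μ(K_n^d), z_α = ∫ s_α dμ, z_{αα} = ∫ s_{αα} dμ for 1 ≤ α ≤ d. Then there exists a positive semidefinite real symmetric (2d+2)×(2d+2) matrix X (rows and columns indexed by 0, 1, …, 2d+1) such that ⟨D, X⟩ = 0, ⟨M_0, X⟩ = z_0, ⟨M_α, X⟩ = z_α for 1 ≤ α ≤ d, and ⟨M_{αα}, X⟩ = z_{αα} for 1 ≤ α ≤ d, where ⟨A, B⟩ = trace(AB) and D, M_0, M_α, M_{αα} are the matrices defined in the context. -/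

import Mathlib

open scoped BigOperators
open MeasureTheory

/-- `sLin n d α x = ∑ i, ξ_{i,α}` -/
noncomputable def sLin (n d : ℕ) (α : Fin d) (x : Fin n → Fin d → ℝ) : ℝ :=
  ∑ i, x i α

/-- `sQuad n d α x = ∑_{i ≠ j} ξ_{i,α} ξ_{j,α}` (sum over ordered pairs). -/
noncomputable def sQuad (n d : ℕ) (α : Fin d) (x : Fin n → Fin d → ℝ) : ℝ :=
  ∑ i, ∑ j, if i = j then 0 else x i α * x j α

/-- The diagonal matrix `D` of size `(2d+2) × (2d+2)`: `D_{0,0} = −1`,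
`D_{α,α} = 1/n` for `1 ≤ α ≤ d`, `D_{j,j} = 1` for `d+1 ≤ j ≤ 2d+1`. -/
noncomputable def Dmat (n d : ℕ) : Matrix (Fin (2 * d + 2)) (Fin (2 * d + 2)) ℝ :=
  Matrix.diagonal fun j =>
    if j.val = 0 then -1 else if j.val ≤ d then 1 / (n : ℝ) else 1

/-- `M_0`: only nonzero entry is `(M_0)_{0,0} = 1`. -/
noncomputable def M0mat (d : ℕ) : Matrix (Fin (2 * d + 2)) (Fin (2 * d + 2)) ℝ :=
  fun i j => if i.val = 0 ∧ j.val = 0 then 1 else 0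

/-- `M_α`: only nonzero entries are `(M_α)_{0,α} = (M_α)_{α,0} = √n/2`. -/
noncomputable def Mlin (n d : ℕ) (α : Fin d) :
    Matrix (Fin (2 * d + 2)) (Fin (2 * d + 2)) ℝ :=
  fun i j =>
    if (i.val = 0 ∧ j.val = (α : ℕ) + 1) ∨ (i.val = (α : ℕ) + 1 ∧ j.val = 0)
    then Real.sqrt n / 2 else 0

/-- `M_{αα}`: only nonzero entries are `(M_{αα})_{α,α} = n − 1` and
`(M_{αα})_{d+α,d+α} = −n`. -/
noncomputable def Mquad (n d : ℕ) (α : Fin d) :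
    Matrix (Fin (2 * d + 2)) (Fin (2 * d + 2)) ℝ :=
  Matrix.diagonal fun j =>
    if j.val = (α : ℕ) + 1 then (n : ℝ) - 1
    else if j.val = d + ((α : ℕ) + 1) then -(n : ℝ) else 0

/-! ### Auxiliary definitions and lemmas -/

/-- `qFun n d α x = ∑ i, ξ_{i,α}²`. -/
noncomputable def qFun (n d : ℕ) (α : Fin d) (x : Fin n → Fin d → ℝ) : ℝ :=
  ∑ i, (x i α)^2

/-- `vFun = (q_α − s_α²/n)/n`, nonnegative by Cauchy–Schwarz. -/
noncomputable def vFun (n d : ℕ) (α : Fin d) (x : Fin n → Fin d → ℝ) : ℝ :=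
  (qFun n d α x - (sLin n d α x)^2 / n) / n

/-- `rFun = max 0 (1 − (∑_α q_α)/n)`, nonnegative and equal to `1 − (∑_α q_α)/n`
on the support. -/
noncomputable def rFun (n d : ℕ) (x : Fin n → Fin d → ℝ) : ℝ :=
  max 0 (1 - (∑ α, qFun n d α x) / n)

/-- The vector of functions whose second moment matrix is the certificate `X`. -/
noncomputable def wFun (n d : ℕ) (x : Fin n → Fin d → ℝ) (j : Fin (2*d+2)) : ℝ :=
  if h0 : j.val = 0 then 1
  else if h1 : j.val ≤ d then sLin n d ⟨j.val - 1, by omega⟩ x / Real.sqrt n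
  else if h2 : j.val ≤ 2*d then Real.sqrt (vFun n d ⟨j.val - d - 1, by omega⟩ x)
  else Real.sqrt (rFun n d x)

lemma wFun_zero (n d : ℕ) (x : Fin n → Fin d → ℝ) (h : 0 < 2*d+2) :
    wFun n d x ⟨0, h⟩ = 1 := by
  simp [wFun]

lemma wFun_e1 (n d : ℕ) (α : Fin d) (x : Fin n → Fin d → ℝ) (h : α.1+1 < 2*d+2) :
    wFun n d x ⟨α.1+1, h⟩ = sLin n d α x / Real.sqrt n := by
  have h1 : α.1 + 1 ≤ d := α.2
  rw [wFun, dif_neg (show ¬(α.1+1 = 0) by omega), dif_pos (show α.1+1 ≤ d from h1)]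
  congr 3

lemma wFun_e2 (n d : ℕ) (α : Fin d) (x : Fin n → Fin d → ℝ) (h : d+α.1+1 < 2*d+2) :
    wFun n d x ⟨d+α.1+1, h⟩ = Real.sqrt (vFun n d α x) := by
  have := α.2
  rw [wFun, dif_neg (show ¬(d+α.1+1 = 0) by omega), dif_neg (show ¬(d+α.1+1 ≤ d) by omega),
    dif_pos (show d+α.1+1 ≤ 2*d by omega)]
  congr 2
  ext
  simp
  omega

lemma wFun_last (n d : ℕ) (x : Fin n → Fin d → ℝ) (h : 2*d+1 < 2*d+2) :
    wFun n d x ⟨2*d+1, h⟩ = Real.sqrt (rFun n d x) := by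
  rw [wFun, dif_neg (show ¬(2*d+1 = 0) by omega), dif_neg (show ¬(2*d+1 ≤ d) by omega),
    dif_neg (show ¬(2*d+1 ≤ 2*d) by omega)]

lemma sQuad_eq (n d : ℕ) (α : Fin d) (x : Fin n → Fin d → ℝ) :
    sQuad n d α x = (sLin n d α x)^2 - qFun n d α x := by
  unfold sQuad sLin qFun
  rw [sq, Finset.sum_mul_sum, ← Finset.sum_sub_distrib]
  refine Finset.sum_congr rfl fun i _ => ?_
  have h : ∀ j : Fin n, (if i = j then (0:ℝ) else x i α * x j α)
      = x i α * x j α - if i = j then x i α * x j α else 0 := by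
    intro j; split <;> ring
  rw [Finset.sum_congr rfl fun j _ => h j, Finset.sum_sub_distrib, Finset.sum_ite_eq]
  simp [sq]

lemma vFun_nonneg (n d : ℕ) (α : Fin d) (x : Fin n → Fin d → ℝ) : 0 ≤ vFun n d α x := by
  have h := sq_sum_le_card_mul_sum_sq (s := (Finset.univ : Finset (Fin n)))
    (f := fun i => x i α)
  simp only [Finset.card_univ, Fintype.card_fin] at h
  unfold vFun qFun sLin
  rcases Nat.eq_zero_or_pos n with h0 | h0
  · subst h0; simp
  · have hn : (0:ℝ) < n := by exact_mod_cast h0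
    have h2 : (∑ i, x i α)^2 / n ≤ ∑ i, (x i α)^2 := by
      rw [div_le_iff₀ hn]
      calc (∑ i, x i α)^2 ≤ (n:ℝ) * ∑ i, (x i α)^2 := by exact_mod_cast h
        _ = (∑ i, (x i α)^2) * n := by ring
    exact div_nonneg (by linarith) hn.le

/-- Decomposition of a sum over `Fin (2d+2)` into the four index blocks. -/
lemma sum_split {M : Type*} [AddCommMonoid M] (d : ℕ) (g : Fin (2*d+2) → M) :
    ∑ j, g j = g ⟨0, by omega⟩ + ∑ α : Fin d, g ⟨α.1+1, by omega⟩ +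
      ∑ α : Fin d, g ⟨d+α.1+1, by omega⟩ + g ⟨2*d+1, by omega⟩ := by
  rw [← Equiv.sum_comp (finCongr (by omega : 1+(d+(d+1)) = 2*d+2)) g, Fin.sum_univ_add,
    Fin.sum_univ_add, Fin.sum_univ_add, Fin.sum_univ_one, Fin.sum_univ_one, ← add_assoc,
    ← add_assoc]
  refine congrArg₂ _ (congrArg₂ _ (congrArg₂ _ ?_ ?_) ?_) ?_
  · congr 1
  · exact Finset.sum_congr rfl fun α _ => by congr 1; ext; simp; omega
  · exact Finset.sum_congr rfl fun α _ => by congr 1; ext; simp; omega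
  · congr 1; ext; simp; omega

lemma double_sum_single {N : ℕ} (a b : Fin N) (f : Fin N → Fin N → ℝ) :
    ∑ j, ∑ k, (if j = a ∧ k = b then f j k else 0) = f a b := by
  simp [ite_and]

lemma sLin_continuous (n d : ℕ) (α : Fin d) : Continuous (sLin n d α) := by
  unfold sLin; fun_prop

lemma qFun_continuous (n d : ℕ) (α : Fin d) : Continuous (qFun n d α) := by
  unfold qFun; fun_prop

lemma vFun_continuous (n d : ℕ) (α : Fin d) : Continuous (vFun n d α) :=
  (((qFun_continuous n d α).sub (((sLin_continuous n d α).pow 2).div_const _)).div_const _)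

lemma rFun_continuous (n d : ℕ) : Continuous (rFun n d) :=
  continuous_const.max (continuous_const.sub
    ((continuous_finset_sum _ fun α _ => qFun_continuous n d α).div_const _))

lemma wFun_continuous (n d : ℕ) (j : Fin (2*d+2)) :
    Continuous (fun x : Fin n → Fin d → ℝ => wFun n d x j) := by
  unfold wFun
  split_ifs
  · exact continuous_const
  · exact (sLin_continuous n d _).div_const _
  · exact Real.continuous_sqrt.comp (vFun_continuous n d _)
  · exact Real.continuous_sqrt.comp (rFun_continuous n d)

lemma wFun_bound (n d : ℕ) (hn : 2 ≤ n) (x : Fin n → Fin d → ℝ)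
    (hx : ∀ i, ∑ α, (x i α)^2 ≤ 1) (j : Fin (2*d+2)) : |wFun n d x j| ≤ n := by
  have hn1 : (1:ℝ) ≤ n := by exact_mod_cast Nat.one_le_of_lt hn
  have habs : ∀ i α, |x i α| ≤ 1 := by
    intro i α
    have h1 : (x i α)^2 ≤ 1 := le_trans (Finset.single_le_sum
      (f := fun β => (x i β)^2) (fun β _ => sq_nonneg _) (Finset.mem_univ α)) (hx i)
    nlinarith [abs_nonneg (x i α), sq_abs (x i α)]
  have hq : ∀ α, qFun n d α x ≤ n := by
    intro α
    unfold qFun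
    calc ∑ i, (x i α)^2 ≤ ∑ i : Fin n, (1:ℝ) := by
          refine Finset.sum_le_sum fun i _ => ?_
          exact le_trans (Finset.single_le_sum (f := fun β => (x i β)^2)
            (fun β _ => sq_nonneg _) (Finset.mem_univ α)) (hx i)
      _ = n := by simp
  have hsL : ∀ α, |sLin n d α x| ≤ n := by
    intro α
    unfold sLin
    calc |∑ i, x i α| ≤ ∑ i, |x i α| := Finset.abs_sum_le_sum_abs _ _
      _ ≤ ∑ i : Fin n, (1:ℝ) := Finset.sum_le_sum fun i _ => habs i α
      _ = n := by simp
  have hn0 : (0:ℝ) < n := by linarith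
  unfold wFun
  split_ifs with h0 h1 h2
  · simpa using hn1
  · rw [abs_div, abs_of_nonneg (Real.sqrt_nonneg _)]
    exact le_trans (div_le_self (abs_nonneg _) (by
      rw [show (1:ℝ) = Real.sqrt 1 from (Real.sqrt_one).symm]
      exact Real.sqrt_le_sqrt hn1)) (hsL _)
  · rw [abs_of_nonneg (Real.sqrt_nonneg _)]
    refine le_trans (Real.sqrt_le_one.mpr ?_) hn1
    unfold vFun
    rw [div_le_one hn0]
    have := hq ⟨j.val - d - 1, by omega⟩
    have h3 : 0 ≤ (sLin n d ⟨j.val - d - 1, by omega⟩ x)^2 / n := by positivity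
    linarith
  · rw [abs_of_nonneg (Real.sqrt_nonneg _)]
    refine le_trans (Real.sqrt_le_one.mpr ?_) hn1
    unfold rFun
    have h4 : 0 ≤ (∑ α, qFun n d α x) / n := by
      apply div_nonneg _ hn0.le
      exact Finset.sum_nonneg fun α _ => Finset.sum_nonneg fun i _ => sq_nonneg _
    rw [max_le_iff]
    constructor <;> linarith

lemma qsum_le (n d : ℕ) (x : Fin n → Fin d → ℝ) (hx : ∀ i, ∑ α, (x i α)^2 ≤ 1) :
    ∑ α, qFun n d α x ≤ n := by
  unfold qFun
  rw [Finset.sum_comm]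
  calc ∑ i : Fin n, ∑ α, (x i α)^2 ≤ ∑ i : Fin n, (1:ℝ) := Finset.sum_le_sum fun i _ => hx i
    _ = n := by simp

theorem stmt_17 (n d : ℕ) (hn : 2 ≤ n) (hd : 1 ≤ d)
    (μ : Measure (Fin n → Fin d → ℝ)) [IsFiniteMeasure μ]
    -- μ is supported on K_n^d
    (hsupp : μ {x | ¬ ∀ i, ∑ α, (x i α) ^ 2 ≤ 1} = 0)
    -- μ is invariant under permutations of the n ball factors
    (hsym : ∀ σ : Equiv.Perm (Fin n),
      Measure.map (fun x : Fin n → Fin d → ℝ => fun i => x (σ i)) μ = μ)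
    (z0 : ℝ) (z zz : Fin d → ℝ)
    (hz0 : z0 = (μ {x | ∀ i, ∑ α, (x i α) ^ 2 ≤ 1}).toReal)
    (hz : ∀ α, z α = ∫ x, sLin n d α x ∂μ)
    (hzz : ∀ α, zz α = ∫ x, sQuad n d α x ∂μ) :
    ∃ X : Matrix (Fin (2 * d + 2)) (Fin (2 * d + 2)) ℝ,
      X.PosSemidef ∧
      (Dmat n d * X).trace = 0 ∧
      (M0mat d * X).trace = z0 ∧
      (∀ α, (Mlin n d α * X).trace = z α) ∧
      (∀ α, (Mquad n d α * X).trace = zz α) := by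
  have hn2 : (2:ℝ) ≤ n := by exact_mod_cast hn
  have hn0 : (0:ℝ) < n := by linarith
  have hnne : (n:ℝ) ≠ 0 := ne_of_gt hn0
  have hsq : Real.sqrt n * Real.sqrt n = n := Real.mul_self_sqrt hn0.le
  have hsne : Real.sqrt n ≠ 0 := by positivity
  have hS : ∀ᵐ x ∂μ, ∀ i, ∑ α, (x i α)^2 ≤ 1 := ae_iff.mpr hsupp
  set X : Matrix (Fin (2*d+2)) (Fin (2*d+2)) ℝ :=
    Matrix.of (fun j k => ∫ x, wFun n d x j * wFun n d x k ∂μ) with hX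
  have hXapp : ∀ j k, X j k = ∫ x, wFun n d x j * wFun n d x k ∂μ := fun j k => rfl
  have hIntw : ∀ j k, Integrable (fun x => wFun n d x j * wFun n d x k) μ := by
    intro j k
    refine ⟨((wFun_continuous n d j).mul (wFun_continuous n d k)).aestronglyMeasurable,
      HasFiniteIntegral.of_bounded (C := (n:ℝ)*n) ?_⟩
    filter_upwards [hS] with x hx
    rw [Real.norm_eq_abs, abs_mul]
    exact mul_le_mul (wFun_bound n d hn x hx j) (wFun_bound n d hn x hx k)
      (abs_nonneg _) hn0.le
  refine ⟨X, Matrix.PosSemidef.of_dotProduct_mulVec_nonneg ?_ ?_, ?_, ?_, ?_, ?_⟩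
  · -- Hermitian
    ext j k
    simp only [Matrix.conjTranspose_apply, star_trivial, hXapp]
    simp_rw [mul_comm]
  · -- nonnegativity
    intro v
    rw [star_trivial]
    have h1 : ∀ x : Fin n → Fin d → ℝ, (∑ j, v j * wFun n d x j)^2
        = ∑ j, ∑ k, (v j * v k) * (wFun n d x j * wFun n d x k) := by
      intro x
      rw [sq, Finset.sum_mul_sum]
      exact Finset.sum_congr rfl fun j _ => Finset.sum_congr rfl fun k _ => by ring
    have h2 : (0:ℝ) ≤ ∫ x, (∑ j, v j * wFun n d x j)^2 ∂μ :=
      integral_nonneg fun x => sq_nonneg _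
    have h3 : ∫ x, (∑ j, v j * wFun n d x j)^2 ∂μ = dotProduct v (X.mulVec v) := by
      simp_rw [h1]
      rw [integral_finset_sum _ (fun j _ => integrable_finset_sum _
        (fun k _ => ((hIntw j k).const_mul _)))]
      simp only [dotProduct, Matrix.mulVec, Finset.mul_sum]
      refine Finset.sum_congr rfl fun j _ => ?_
      rw [integral_finset_sum _ (fun k _ => ((hIntw j k).const_mul _))]
      refine Finset.sum_congr rfl fun k _ => ?_
      rw [integral_const_mul, hXapp]
      ring
    rw [← h3]
    exact h2
  · -- D constraint
    have htr : (Dmat n d * X).trace = ∑ j : Fin (2*d+2),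
        (if j.val = 0 then (-1:ℝ) else if j.val ≤ d then 1/(n:ℝ) else 1) * X j j := by
      simp [Dmat, Matrix.trace, Matrix.diag, Matrix.diagonal_mul]
    rw [htr]
    have hstep : ∀ j : Fin (2*d+2),
        (if j.val = 0 then (-1:ℝ) else if j.val ≤ d then 1/(n:ℝ) else 1) * X j j
        = ∫ x, (if j.val = 0 then (-1:ℝ) else if j.val ≤ d then 1/(n:ℝ) else 1)
            * (wFun n d x j * wFun n d x j) ∂μ := by
      intro j; rw [hXapp]; exact (integral_const_mul _ _).symm
    simp_rw [hstep]
    rw [← integral_finset_sum _ (fun j _ => (hIntw j j).const_mul _)]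
    apply integral_eq_zero_of_ae
    filter_upwards [hS] with x hx
    simp only [Pi.zero_apply]
    rw [sum_split d (fun j => (if j.val = 0 then (-1:ℝ) else if j.val ≤ d then 1/(n:ℝ) else 1)
      * (wFun n d x j * wFun n d x j))]
    have k0 : ∀ h : 0 < 2*d+2,
        (if (⟨0, h⟩ : Fin (2*d+2)).val = 0 then (-1:ℝ)
          else if (⟨0, h⟩ : Fin (2*d+2)).val ≤ d then 1/(n:ℝ) else 1) = -1 := by
      intro h; rw [if_pos rfl]
    have k1 : ∀ (β : Fin d) (h : β.1+1 < 2*d+2),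
        (if (⟨β.1+1, h⟩ : Fin (2*d+2)).val = 0 then (-1:ℝ)
          else if (⟨β.1+1, h⟩ : Fin (2*d+2)).val ≤ d then 1/(n:ℝ) else 1) = 1/(n:ℝ) := by
      intro β h
      have hb := β.2
      rw [if_neg (show ¬(β.1+1 = 0) by omega), if_pos (show β.1+1 ≤ d by omega)]
    have k2 : ∀ (β : Fin d) (h : d+β.1+1 < 2*d+2),
        (if (⟨d+β.1+1, h⟩ : Fin (2*d+2)).val = 0 then (-1:ℝ)
          else if (⟨d+β.1+1, h⟩ : Fin (2*d+2)).val ≤ d then 1/(n:ℝ) else 1) = 1 := by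
      intro β h
      rw [if_neg (show ¬(d+β.1+1 = 0) by omega), if_neg (show ¬(d+β.1+1 ≤ d) by omega)]
    have kL : ∀ h : 2*d+1 < 2*d+2,
        (if (⟨2*d+1, h⟩ : Fin (2*d+2)).val = 0 then (-1:ℝ)
          else if (⟨2*d+1, h⟩ : Fin (2*d+2)).val ≤ d then 1/(n:ℝ) else 1) = 1 := by
      intro h
      rw [if_neg (show ¬(2*d+1 = 0) by omega), if_neg (show ¬(2*d+1 ≤ d) by omega)]
    simp only [k0, k1, k2, kL, wFun_zero, wFun_e1, wFun_e2, wFun_last, one_mul, mul_one]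
    have hv : ∀ β : Fin d, Real.sqrt (vFun n d β x) * Real.sqrt (vFun n d β x)
        = vFun n d β x := fun β => Real.mul_self_sqrt (vFun_nonneg n d β x)
    have hr : Real.sqrt (rFun n d x) * Real.sqrt (rFun n d x) = rFun n d x :=
      Real.mul_self_sqrt (le_max_left _ _)
    simp only [hv, hr]
    have hrEq : rFun n d x = 1 - (∑ β, qFun n d β x)/n := by
      refine max_eq_right ?_
      have := qsum_le n d x hx
      rw [sub_nonneg, div_le_one hn0]
      exact this
    rw [hrEq]
    have hterm : ∀ β : Fin d, 1/(n:ℝ) * (sLin n d β x / Real.sqrt n * (sLin n d β x / Real.sqrt n))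
        + vFun n d β x = qFun n d β x / n := by
      intro β
      rw [div_mul_div_comm, hsq]
      unfold vFun
      field_simp
      ring
    have hcomb : (∑ β, 1/(n:ℝ) * (sLin n d β x / Real.sqrt n * (sLin n d β x / Real.sqrt n)))
        + ∑ β, vFun n d β x = (∑ β, qFun n d β x)/n := by
      rw [← Finset.sum_add_distrib, Finset.sum_congr rfl fun β _ => hterm β, Finset.sum_div]
    simp only [if_true]
    linarith [hcomb]
  · -- M0 constraint
    rw [hz0]
    have htr : (M0mat d * X).trace = ∑ j, ∑ k, M0mat d j k * X k j := by
      simp [Matrix.trace, Matrix.diag, Matrix.mul_apply]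
    rw [htr]
    have hM : ∀ j k : Fin (2*d+2), M0mat d j k * X k j
        = if j = (⟨0, by omega⟩ : Fin (2*d+2)) ∧ k = (⟨0, by omega⟩ : Fin (2*d+2))
          then X k j else 0 := by
      intro j k
      have h1 : (j = (⟨0, by omega⟩ : Fin (2*d+2)) ∧ k = (⟨0, by omega⟩ : Fin (2*d+2)))
          ↔ (j.val = 0 ∧ k.val = 0) := by simp only [Fin.ext_iff]
      simp only [M0mat, h1]
      split_ifs <;> simp
    simp_rw [hM]
    rw [double_sum_single]
    rw [hXapp]
    simp_rw [wFun_zero, one_mul]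
    have hμ : μ {x | ∀ i, ∑ α, (x i α)^2 ≤ 1} = μ Set.univ :=
      measure_congr (ae_eq_univ.mpr (by rwa [Set.compl_setOf]))
    rw [hμ]
    simp [integral_const, Measure.real]
  · -- Mlin constraints
    intro α
    rw [hz α]
    have htr : (Mlin n d α * X).trace = ∑ j, ∑ k, Mlin n d α j k * X k j := by
      simp [Matrix.trace, Matrix.diag, Matrix.mul_apply]
    rw [htr]
    have hM : ∀ j k : Fin (2*d+2), Mlin n d α j k * X k j
        = (if j = (⟨0, by omega⟩ : Fin (2*d+2)) ∧ k = (⟨α.1+1, by omega⟩ : Fin (2*d+2))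
            then Real.sqrt n / 2 * X k j else 0)
          + (if j = (⟨α.1+1, by omega⟩ : Fin (2*d+2)) ∧ k = (⟨0, by omega⟩ : Fin (2*d+2))
            then Real.sqrt n / 2 * X k j else 0) := by
      intro j k
      have h1 : (j = (⟨0, by omega⟩ : Fin (2*d+2)) ∧ k = (⟨α.1+1, by omega⟩ : Fin (2*d+2)))
          ↔ (j.val = 0 ∧ k.val = α.1+1) := by simp only [Fin.ext_iff]
      have h2 : (j = (⟨α.1+1, by omega⟩ : Fin (2*d+2)) ∧ k = (⟨0, by omega⟩ : Fin (2*d+2)))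
          ↔ (j.val = α.1+1 ∧ k.val = 0) := by simp only [Fin.ext_iff]
      simp only [Mlin, h1, h2]
      by_cases c1 : j.val = 0 ∧ k.val = α.1+1 <;> by_cases c2 : j.val = α.1+1 ∧ k.val = 0
      · omega
      · simp [c1, c2]
      · simp [c1, c2]
      · simp only [c1, c2, or_self, if_false, zero_mul, add_zero]
    simp_rw [hM]
    simp only [Finset.sum_add_distrib]
    rw [double_sum_single, double_sum_single]
    rw [hXapp, hXapp]
    simp_rw [wFun_zero, wFun_e1, one_mul, mul_one]
    rw [integral_div]
    field_simp
    ring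
  · -- Mquad constraints
    intro α
    rw [hzz α]
    have htr : (Mquad n d α * X).trace = ∑ j : Fin (2*d+2),
        (if j.val = α.1+1 then (n:ℝ)-1
          else if j.val = d + (α.1+1) then -(n:ℝ) else 0) * X j j := by
      simp [Mquad, Matrix.trace, Matrix.diag, Matrix.diagonal_mul]
    rw [htr, sum_split d (fun j => (if j.val = α.1+1 then (n:ℝ)-1
      else if j.val = d + (α.1+1) then -(n:ℝ) else 0) * X j j)]
    have hav := α.2
    have k0 : ∀ h : 0 < 2*d+2,
        (if (⟨0, h⟩ : Fin (2*d+2)).val = α.1+1 then (n:ℝ)-1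
          else if (⟨0, h⟩ : Fin (2*d+2)).val = d + (α.1+1) then -(n:ℝ) else 0) = 0 := by
      intro h
      rw [if_neg (show ¬((0:ℕ) = α.1+1) by omega), if_neg (show ¬((0:ℕ) = d + (α.1+1)) by omega)]
    have k1 : ∀ (β : Fin d) (h : β.1+1 < 2*d+2),
        (if (⟨β.1+1, h⟩ : Fin (2*d+2)).val = α.1+1 then (n:ℝ)-1
          else if (⟨β.1+1, h⟩ : Fin (2*d+2)).val = d + (α.1+1) then -(n:ℝ) else 0)
        = if β = α then (n:ℝ)-1 else 0 := by
      intro β h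
      have hb := β.2
      by_cases hβ : β = α
      · subst hβ
        rw [if_pos rfl, if_pos rfl]
      · rw [if_neg (fun hc => hβ (Fin.ext (by
            have hc' : β.1+1 = α.1+1 := hc; omega))),
          if_neg (show ¬(β.1+1 = d + (α.1+1)) by omega), if_neg hβ]
    have k2 : ∀ (β : Fin d) (h : d+β.1+1 < 2*d+2),
        (if (⟨d+β.1+1, h⟩ : Fin (2*d+2)).val = α.1+1 then (n:ℝ)-1
          else if (⟨d+β.1+1, h⟩ : Fin (2*d+2)).val = d + (α.1+1) then -(n:ℝ) else 0)
        = if β = α then -(n:ℝ) else 0 := by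
      intro β h
      have hb := β.2
      by_cases hβ : β = α
      · subst hβ
        rw [if_neg (show ¬(d+β.1+1 = β.1+1) by omega),
          if_pos (show d+β.1+1 = d + (β.1+1) by omega), if_pos rfl]
      · rw [if_neg (show ¬(d+β.1+1 = α.1+1) by omega),
          if_neg (fun hc => hβ (Fin.ext (by
            have hc' : d+β.1+1 = d + (α.1+1) := hc; omega))), if_neg hβ]
    have kL : ∀ h : 2*d+1 < 2*d+2,
        (if (⟨2*d+1, h⟩ : Fin (2*d+2)).val = α.1+1 then (n:ℝ)-1
          else if (⟨2*d+1, h⟩ : Fin (2*d+2)).val = d + (α.1+1) then -(n:ℝ) else 0) = 0 := by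
      intro h
      rw [if_neg (show ¬(2*d+1 = α.1+1) by omega), if_neg (show ¬(2*d+1 = d + (α.1+1)) by omega)]
    simp only [k0, k1, k2, kL, zero_mul, ite_mul, Finset.sum_ite_eq', Finset.mem_univ,
      if_true, zero_add, add_zero]
    rw [hXapp, hXapp]
    rw [← integral_const_mul, ← integral_const_mul, ← integral_add
      ((hIntw _ _).const_mul _) ((hIntw _ _).const_mul _)]
    refine integral_congr_ae (Filter.Eventually.of_forall fun x => ?_)
    simp only [wFun_e1, wFun_e2]
    rw [Real.mul_self_sqrt (vFun_nonneg n d α x), sQuad_eq, div_mul_div_comm, hsq]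
    unfold vFun
    field_simp
    ring
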